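/- Suppose the real random variable L(X) satisfies the tail asymptotic lim_{u→∞} log P(L(X) > u) / Λ(u^{1/ρ}) = −I* with I* > 0, where Λ:(0,∞)→(0,∞) is eventually strictly increasing, Λ(x) → ∞, and Λ ∈ RV(α) for some α > 0. Then the naive asymptotic CVaR variance σ_c²(β) = β^{−2} Var[(L(X) − v_β)^+] satisfies: for every δ > 0 there exists β_0 > 0 such that σ_c²(β) ≥ β^{−1+δ} for all β ∈ (0, β_0). -/

import Mathlib

open MeasureTheory Filter Real Topology ProbabilityTheory

/-- A function `f : (0,∞) → (0,∞)` is regularly varying with index `p`. -/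
def RegVary (f : ℝ → ℝ) (p : ℝ) : Prop :=
  ∀ x : ℝ, 0 < x → Tendsto (fun t => f (t * x) / f t) atTop (𝓝 (x ^ p))

/-- Value at risk at tail probability level `β` of the random variable `Z`. -/
noncomputable def VaR {Ω : Type*} [MeasurableSpace Ω] (μ : Measure Ω) (Z : Ω → ℝ) (β : ℝ) : ℝ :=
  sInf {u : ℝ | 1 - β ≤ (μ {ω | Z ω ≤ u}).toReal}

section Aux

lemma rv_log_growth {Λ : ℝ → ℝ} {α : ℝ} (hα : 0 < α)
    (hΛpos : ∀ x : ℝ, 0 < x → 0 < Λ x)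
    (hΛmono : ∃ x₀ : ℝ, StrictMonoOn Λ (Set.Ici x₀))
    (hΛRV : RegVary Λ α) (M : ℝ) (hM : 0 < M) :
    ∀ᶠ t in atTop, M * Real.log t ≤ Λ t := by
  obtain ⟨x₀, hmono⟩ := hΛmono
  have h2α : (1:ℝ) < 2 ^ α := by
    have h := Real.rpow_lt_rpow_of_exponent_lt (x := (2:ℝ)) (y := (0:ℝ)) (z := α) one_lt_two hα
    simpa using h
  set q : ℝ := (1 + 2 ^ α) / 2 with hq
  have hq1 : 1 < q := by rw [hq]; linarith
  have hq2 : q < 2 ^ α := by rw [hq]; linarith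
  have h2 := hΛRV 2 two_pos
  have hev : ∀ᶠ t in atTop, q ≤ Λ (t * 2) / Λ t := h2.eventually (eventually_ge_nhds hq2)
  obtain ⟨T₀, hT₀⟩ := eventually_atTop.1 hev
  set T : ℝ := max (max T₀ x₀) 1 with hT
  have hT1 : (1:ℝ) ≤ T := le_max_right _ _
  have hTx₀ : x₀ ≤ T := le_trans (le_max_right _ _) (le_max_left _ _)
  have hTT₀ : T₀ ≤ T := le_trans (le_max_left _ _) (le_max_left _ _)
  have hTpos : 0 < T := lt_of_lt_of_le one_pos hT1
  have step : ∀ t, T ≤ t → Λ t * q ≤ Λ (t * 2) := by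
    intro t ht
    have hq' := hT₀ t (le_trans hTT₀ ht)
    have htpos : 0 < Λ t := hΛpos t (lt_of_lt_of_le hTpos ht)
    calc Λ t * q ≤ Λ t * (Λ (t * 2) / Λ t) := by
          exact mul_le_mul_of_nonneg_left hq' htpos.le
      _ = Λ (t * 2) := by field_simp
  have chain : ∀ n : ℕ, Λ T * q ^ n ≤ Λ (T * 2 ^ n) := by
    intro n
    induction n with
    | zero => simp
    | succ n ih =>
      have h1 : T ≤ T * 2 ^ n := by
        nlinarith [one_le_pow₀ (n := n) (one_le_two (α := ℝ)), pow_pos (two_pos (α := ℝ)) n]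
      calc Λ T * q ^ (n + 1) = (Λ T * q ^ n) * q := by ring
        _ ≤ Λ (T * 2 ^ n) * q := by
            have : 0 < q := lt_trans one_pos hq1
            nlinarith
        _ ≤ Λ ((T * 2 ^ n) * 2) := step _ h1
        _ = Λ (T * 2 ^ (n + 1)) := by ring_nf
  -- quadratic lower bound for q ^ n
  have hc : 0 < Real.log q := Real.log_pos hq1
  set c := Real.log q with hcdef
  have hqpow : ∀ n : ℕ, ((n:ℝ) * c) ^ 2 / 4 ≤ q ^ n := by
    intro n
    have h1 : (n:ℝ) * c / 2 + 1 ≤ Real.exp ((n:ℝ) * c / 2) := Real.add_one_le_exp _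
    have h2 : q ^ n = Real.exp ((n:ℝ) * c) := by
      rw [← Real.exp_log (lt_trans one_pos hq1), ← Real.exp_nat_mul]
    have h3 : Real.exp ((n:ℝ) * c) = (Real.exp ((n:ℝ) * c / 2)) ^ 2 := by
      rw [sq, ← Real.exp_add]; ring_nf
    have hnc : 0 ≤ (n:ℝ) * c / 2 := by positivity
    nlinarith [Real.exp_pos ((n:ℝ) * c / 2)]
  -- choose N
  set L2 := Real.log 2 with hL2
  have hL2pos : 0 < L2 := Real.log_pos one_lt_two
  set LT := Real.log T with hLT
  have hLTnn : 0 ≤ LT := Real.log_nonneg hT1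
  set A := Λ T * c ^ 2 / 4 with hA
  have hApos : 0 < A := by
    have := hΛpos T hTpos
    positivity
  set C₀ := 2 * M * L2 + M * LT with hC₀
  have hC₀nn : 0 ≤ C₀ := by positivity
  set N : ℕ := ⌈(M * L2 + C₀) / A⌉₊ + 1 with hN
  have hNkey : ∀ n : ℕ, N ≤ n → M * (((n:ℝ) + 2) * L2 + LT) ≤ Λ T * q ^ n := by
    intro n hn
    have hn1 : (1:ℝ) ≤ (n:ℝ) := by
      have : 1 ≤ n := le_trans (by omega) hn
      exact_mod_cast this
    have hnge : (M * L2 + C₀) / A ≤ (n:ℝ) := by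
      calc (M * L2 + C₀) / A ≤ (⌈(M * L2 + C₀) / A⌉₊ : ℝ) := Nat.le_ceil _
        _ ≤ (n:ℝ) := by exact_mod_cast le_trans (by omega) hn
    have hAn : M * L2 + C₀ ≤ A * n := by
      rw [div_le_iff₀ hApos] at hnge; linarith [hnge]
    have hquad : A * (n:ℝ) ^ 2 ≥ M * L2 * n + C₀ := by
      have h := mul_le_mul_of_nonneg_right hAn (le_trans zero_le_one hn1)
      have h2 := mul_nonneg hC₀nn (by linarith : (0:ℝ) ≤ (n:ℝ) - 1)
      nlinarith [h, h2]
    have hqn := hqpow n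
    have hΛTpos : 0 < Λ T := hΛpos T hTpos
    have : A * (n:ℝ) ^ 2 ≤ Λ T * q ^ n := by
      rw [hA]
      calc Λ T * c ^ 2 / 4 * (n:ℝ) ^ 2 = Λ T * (((n:ℝ) * c) ^ 2 / 4) := by ring
        _ ≤ Λ T * q ^ n := mul_le_mul_of_nonneg_left hqn hΛTpos.le
    linarith
  -- conclude
  rw [eventually_atTop]
  refine ⟨T * 2 ^ N, fun t ht => ?_⟩
  have htpos : 0 < t := lt_of_lt_of_le (by positivity) ht
  have htT : (2:ℝ) ^ N ≤ t / T := by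
    rw [le_div_iff₀ hTpos]; linarith [ht]
  have htT1 : (1:ℝ) ≤ t / T := le_trans (one_le_pow₀ one_le_two) htT
  set n : ℕ := ⌊Real.logb 2 (t / T)⌋₊ with hn
  have hlogbnn : 0 ≤ Real.logb 2 (t / T) := Real.logb_nonneg one_lt_two htT1
  have hNn : N ≤ n := by
    apply Nat.le_floor
    calc (N:ℝ) = Real.logb 2 (2 ^ N) := by
          rw [Real.logb_pow]; simp [Real.logb_self_eq_one]
      _ ≤ Real.logb 2 (t / T) := by
          apply Real.logb_le_logb_of_le one_lt_two (by positivity) htT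
  have ha : (2:ℝ) ^ n ≤ t / T := by
    have h1 : (n:ℝ) ≤ Real.logb 2 (t / T) := Nat.floor_le hlogbnn
    calc (2:ℝ) ^ n = (2:ℝ) ^ (n:ℝ) := by rw [Real.rpow_natCast]
      _ ≤ (2:ℝ) ^ Real.logb 2 (t / T) := Real.rpow_le_rpow_of_exponent_le one_le_two h1
      _ = t / T := Real.rpow_logb two_pos (by norm_num) (by linarith)
  have hb : t / T < (2:ℝ) ^ (n + 1) := by
    have h1 : Real.logb 2 (t / T) < (n:ℝ) + 1 := Nat.lt_floor_add_one _
    calc t / T = (2:ℝ) ^ Real.logb 2 (t / T) := (Real.rpow_logb two_pos (by norm_num) (by linarith)).symm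
      _ < (2:ℝ) ^ ((n:ℝ) + 1) := Real.rpow_lt_rpow_of_exponent_lt one_lt_two h1
      _ = (2:ℝ) ^ (n + 1) := by
          rw [← Real.rpow_natCast (2:ℝ) (n+1)]; norm_num
  have hTn : T * 2 ^ n ≤ t := by
    have := (le_div_iff₀ hTpos).1 ha
    linarith
  have hmem1 : T * 2 ^ n ∈ Set.Ici x₀ := by
    simp only [Set.mem_Ici]
    nlinarith [one_le_pow₀ (n := n) (one_le_two (α := ℝ)), pow_pos (two_pos (α := ℝ)) n]
  have hmem2 : t ∈ Set.Ici x₀ := Set.mem_Ici.2 (le_trans hmem1 hTn)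
  have hΛt : Λ (T * 2 ^ n) ≤ Λ t := hmono.monotoneOn hmem1 hmem2 hTn
  have hlogt : Real.log t ≤ ((n:ℝ) + 2) * L2 + LT := by
    have h1 : t < T * 2 ^ (n + 1) := by
      have := (div_lt_iff₀ hTpos).1 hb
      linarith
    have h2 : Real.log t ≤ Real.log (T * 2 ^ (n + 1)) :=
      Real.log_le_log htpos h1.le
    have h3 : Real.log (T * 2 ^ (n + 1)) = LT + ((n:ℝ) + 1) * L2 := by
      rw [Real.log_mul (ne_of_gt hTpos) (by positivity), Real.log_pow]
      push_cast; ring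
    linarith
  calc M * Real.log t ≤ M * (((n:ℝ) + 2) * L2 + LT) :=
        mul_le_mul_of_nonneg_left hlogt hM.le
    _ ≤ Λ T * q ^ n := hNkey n hNn
    _ ≤ Λ (T * 2 ^ n) := chain n
    _ ≤ Λ t := hΛt

lemma tail_poly {G Λ : ℝ → ℝ} {ρ α Istar : ℝ} (hρ : 0 < ρ) (hα : 0 < α) (hIstar : 0 < Istar)
    (hGpos : ∀ u : ℝ, 0 < G u)
    (hΛpos : ∀ x : ℝ, 0 < x → 0 < Λ x)
    (hΛgrow : ∀ M : ℝ, 0 < M → ∀ᶠ t in atTop, M * Real.log t ≤ Λ t)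
    (htail : Tendsto (fun u : ℝ => Real.log (G u) / Λ (u ^ (1 / ρ))) atTop (𝓝 (-Istar))) :
    ∀ᶠ u in atTop, G u ≤ 1 / u ^ 4 := by
  have hcomp : Tendsto (fun u : ℝ => u ^ (1 / ρ)) atTop atTop :=
    tendsto_rpow_atTop (by positivity)
  have h1 : ∀ᶠ u in atTop, Real.log (G u) / Λ (u ^ (1 / ρ)) ≤ -Istar / 2 :=
    htail.eventually (eventually_le_nhds (by linarith))
  set M : ℝ := 8 * ρ / Istar with hM
  have hMpos : 0 < M := by positivity
  have h2 : ∀ᶠ u in atTop, M * Real.log (u ^ (1 / ρ)) ≤ Λ (u ^ (1 / ρ)) :=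
    hcomp.eventually (hΛgrow M hMpos)
  filter_upwards [h1, h2, eventually_ge_atTop (1:ℝ)] with u hu1 hu2 hu3
  have hupos : (0:ℝ) < u := lt_of_lt_of_le one_pos hu3
  have hlogu : 0 ≤ Real.log u := Real.log_nonneg hu3
  have hΛu : 0 < Λ (u ^ (1 / ρ)) := hΛpos _ (Real.rpow_pos_of_pos hupos _)
  have hlogrpow : Real.log (u ^ (1 / ρ)) = (1 / ρ) * Real.log u := Real.log_rpow hupos _
  have key : Real.log (G u) ≤ -Istar / 2 * Λ (u ^ (1 / ρ)) := by
    have := (div_le_iff₀ hΛu).1 hu1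
    linarith
  have key2 : Real.log (G u) ≤ -(4 * Real.log u) := by
    have hMlog : M * ((1 / ρ) * Real.log u) ≤ Λ (u ^ (1 / ρ)) := by
      rw [hlogrpow] at hu2; exact hu2
    have hMsimp : M * ((1 / ρ) * Real.log u) = 8 / Istar * Real.log u := by
      rw [hM]; field_simp
    have h4 : -Istar / 2 * Λ (u ^ (1 / ρ)) ≤ -Istar / 2 * (8 / Istar * Real.log u) := by
      apply mul_le_mul_of_nonpos_left _ (by linarith)
      rw [← hMsimp]; exact hMlog
    have h5 : -Istar / 2 * (8 / Istar * Real.log u) = -(4 * Real.log u) := by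
      field_simp; ring
    linarith
  have : G u ≤ Real.exp (-(4 * Real.log u)) := by
    calc G u = Real.exp (Real.log (G u)) := (Real.exp_log (hGpos u)).symm
      _ ≤ Real.exp (-(4 * Real.log u)) := Real.exp_le_exp.2 key2
  calc G u ≤ Real.exp (-(4 * Real.log u)) := this
    _ = 1 / u ^ 4 := by
        rw [Real.exp_neg]
        congr 1
        rw [show (4:ℝ) * Real.log u = ((4:ℕ):ℝ) * Real.log u by norm_num,
          Real.exp_nat_mul, Real.exp_log hupos]
        norm_num

lemma ofReal_addone_sq (k : ℕ) :
    ENNReal.ofReal (((k : ℝ) + 1) ^ 2) = ((k : ENNReal) + 1) ^ 2 := by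
  rw [ENNReal.ofReal_pow (by positivity)]
  congr 1
  rw [ENNReal.ofReal_add (by positivity) zero_le_one, ENNReal.ofReal_natCast,
    ENNReal.ofReal_one]

lemma memLp_of_tail {Ω : Type*} [MeasurableSpace Ω] (μ : Measure Ω) [IsProbabilityMeasure μ]
    (Z : Ω → ℝ) (hZ : Measurable Z) (u₁ : ℝ) (hu₁ : 1 ≤ u₁)
    (h : ∀ u : ℝ, u₁ ≤ u → (μ {ω | u < Z ω}).toReal ≤ 1 / u ^ 4) (v : ℝ) :
    MemLp (fun ω => max (Z ω - v) 0) 2 μ := by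
  set Y : Ω → ℝ := fun ω => max (Z ω - v) 0 with hY
  have hYmeas : Measurable Y := (hZ.sub_const v).max measurable_const
  have hYnn : ∀ ω, 0 ≤ Y ω := fun ω => le_max_right _ _
  rw [memLp_two_iff_integrable_sq hYmeas.aestronglyMeasurable]
  constructor
  · exact (hYmeas.pow_const 2).aestronglyMeasurable
  rw [hasFiniteIntegral_iff_ofReal (ae_of_all _ fun ω => sq_nonneg _)]
  set S : ℕ → Set Ω := fun n => {ω | (n : ℝ) ≤ Y ω} with hS
  have hSmeas : ∀ n, MeasurableSet (S n) := fun n => hYmeas measurableSet_Ici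
  have hpt : ∀ ω, ENNReal.ofReal (Y ω ^ 2) ≤
      ∑' n : ℕ, ((S n).indicator (fun _ => ((n : ENNReal) + 1) ^ 2) ω) := by
    intro ω
    set k : ℕ := ⌊Y ω⌋₊ with hk
    have hk1 : Y ω < k + 1 := Nat.lt_floor_add_one _
    have hk0 : (k : ℝ) ≤ Y ω := Nat.floor_le (hYnn ω)
    have hmem : ω ∈ S k := hk0
    have hterm : (S k).indicator (fun _ => ((k : ENNReal) + 1) ^ 2) ω = ((k : ENNReal) + 1) ^ 2 :=
      Set.indicator_of_mem hmem _
    calc ENNReal.ofReal (Y ω ^ 2) ≤ ENNReal.ofReal (((k : ℝ) + 1) ^ 2) := by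
          apply ENNReal.ofReal_le_ofReal
          nlinarith [hYnn ω]
      _ = ((k : ENNReal) + 1) ^ 2 := ofReal_addone_sq k
      _ = (S k).indicator (fun _ => ((k : ENNReal) + 1) ^ 2) ω := hterm.symm
      _ ≤ ∑' n : ℕ, ((S n).indicator (fun _ => ((n : ENNReal) + 1) ^ 2) ω) := ENNReal.le_tsum k
  calc ∫⁻ ω, ENNReal.ofReal (Y ω ^ 2) ∂μ
      ≤ ∫⁻ ω, ∑' n : ℕ, ((S n).indicator (fun _ => ((n : ENNReal) + 1) ^ 2) ω) ∂μ :=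
        lintegral_mono hpt
    _ = ∑' n : ℕ, ∫⁻ ω, ((S n).indicator (fun _ => ((n : ENNReal) + 1) ^ 2) ω) ∂μ :=
        lintegral_tsum (fun n => ((measurable_const).indicator (hSmeas n)).aemeasurable)
    _ = ∑' n : ℕ, ((n : ENNReal) + 1) ^ 2 * μ (S n) := by
        congr 1; ext n
        rw [lintegral_indicator (hSmeas n), setLIntegral_const]
    _ < ⊤ := by
      set n₀ : ℕ := ⌈u₁ + 1 - v⌉₊ + 1 with hn₀
      set K : ℝ := ((n₀ : ℝ) + 1) ^ 4 with hK
      have hvn₀ : u₁ + 1 - v ≤ (n₀ : ℝ) := by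
        rcases le_or_gt (u₁ + 1 - v) 0 with hc | hc
        · have : (0:ℝ) ≤ (n₀ : ℝ) := by positivity
          linarith
        · have h1 := Nat.le_ceil (u₁ + 1 - v)
          have h2 : ((⌈u₁ + 1 - v⌉₊ : ℝ)) ≤ (n₀ : ℝ) := by
            rw [hn₀]; push_cast; linarith
          linarith
      have hbound : ∀ n : ℕ, ((n : ENNReal) + 1) ^ 2 * μ (S n) ≤
          ENNReal.ofReal (K / ((n : ℝ) + 1) ^ 2) := by
        intro n
        rcases le_or_gt n n₀ with hn | hn
        · have hμ : μ (S n) ≤ 1 := prob_le_one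
          calc ((n : ENNReal) + 1) ^ 2 * μ (S n) ≤ ((n : ENNReal) + 1) ^ 2 * 1 :=
                mul_le_mul_right hμ _
            _ = ENNReal.ofReal (((n : ℝ) + 1) ^ 2) := by rw [mul_one, ofReal_addone_sq]
            _ ≤ ENNReal.ofReal (K / ((n : ℝ) + 1) ^ 2) := by
                apply ENNReal.ofReal_le_ofReal
                rw [le_div_iff₀ (by positivity)]
                have h1 : ((n : ℝ) + 1) ≤ ((n₀ : ℝ) + 1) := by
                  have : (n : ℝ) ≤ (n₀ : ℝ) := by exact_mod_cast hn
                  linarith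
                calc ((n : ℝ) + 1) ^ 2 * ((n : ℝ) + 1) ^ 2 = ((n : ℝ) + 1) ^ 4 := by ring
                  _ ≤ ((n₀ : ℝ) + 1) ^ 4 := pow_le_pow_left₀ (by positivity) h1 4
                  _ = K := rfl
        · -- large n : use the tail bound
          have hnb : (n₀ : ℝ) ≤ (n : ℝ) := by exact_mod_cast hn.le
          have hvn : u₁ ≤ v + (n : ℝ) - 1 := by linarith
          have hw1 : (1:ℝ) ≤ v + (n : ℝ) - 1 := le_trans hu₁ hvn
          have hsub : S n ⊆ {ω | (v + (n : ℝ) - 1) < Z ω} := by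
            intro ω hω
            simp only [Set.mem_setOf_eq]
            have h1 : (n : ℝ) ≤ Y ω := hω
            have h2 : (1:ℝ) ≤ (n:ℝ) := by
              have : 1 ≤ n := by omega
              exact_mod_cast this
            have h3 : 0 < Y ω := lt_of_lt_of_le one_pos (le_trans h2 h1)
            have h4 : Y ω = Z ω - v := by
              rcases le_or_gt (Z ω - v) 0 with hc | hc
              · exfalso
                have hz : Y ω = 0 := by simp only [hY]; exact max_eq_right hc
                linarith
              · simp only [hY]; exact max_eq_left hc.le
            rw [h4] at h1
            linarith
          have hμs : μ (S n) ≤ ENNReal.ofReal (1 / (v + (n : ℝ) - 1) ^ 4) := by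
            calc μ (S n) ≤ μ {ω | (v + (n : ℝ) - 1) < Z ω} := measure_mono hsub
              _ = ENNReal.ofReal ((μ {ω | (v + (n : ℝ) - 1) < Z ω}).toReal) := by
                  rw [ENNReal.ofReal_toReal (measure_ne_top μ _)]
              _ ≤ ENNReal.ofReal (1 / (v + (n : ℝ) - 1) ^ 4) :=
                  ENNReal.ofReal_le_ofReal (h _ hvn)
          calc ((n : ENNReal) + 1) ^ 2 * μ (S n)
              ≤ ENNReal.ofReal (((n : ℝ) + 1) ^ 2) * ENNReal.ofReal (1 / (v + (n : ℝ) - 1) ^ 4) := by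
                rw [ofReal_addone_sq]; exact mul_le_mul_right hμs _
            _ = ENNReal.ofReal (((n : ℝ) + 1) ^ 2 * (1 / (v + (n : ℝ) - 1) ^ 4)) := by
                rw [ENNReal.ofReal_mul (by positivity)]
            _ ≤ ENNReal.ofReal (K / ((n : ℝ) + 1) ^ 2) := by
                apply ENNReal.ofReal_le_ofReal
                have hm : ((n:ℝ) - (n₀:ℝ)) + 1 ≤ v + (n : ℝ) - 1 := by linarith
                have hkey : ((n:ℝ) + 1) ≤ ((n₀:ℝ) + 1) * (v + (n:ℝ) - 1) := by nlinarith
                have hp : ((n:ℝ) + 1) ^ 4 ≤ (((n₀:ℝ) + 1) * (v + (n:ℝ) - 1)) ^ 4 :=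
                  pow_le_pow_left₀ (by positivity) hkey 4
                rw [mul_pow] at hp
                rw [mul_one_div, div_le_div_iff₀ (by positivity) (by positivity)]
                calc ((n:ℝ) + 1) ^ 2 * ((n:ℝ) + 1) ^ 2 = ((n:ℝ) + 1) ^ 4 := by ring
                  _ ≤ ((n₀:ℝ) + 1) ^ 4 * (v + (n:ℝ) - 1) ^ 4 := hp
                  _ = K * (v + (n:ℝ) - 1) ^ 4 := rfl
      have hsum : Summable (fun n : ℕ => K / ((n:ℝ) + 1) ^ 2) := by
        have h0 : Summable (fun n : ℕ => 1 / ((n:ℝ) + 1) ^ 2) := by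
          have h1 : Summable (fun n : ℕ => 1 / ((n:ℝ)) ^ 2) :=
            summable_one_div_nat_pow.2 one_lt_two
          have h2 := (summable_nat_add_iff 1).2 h1
          apply h2.congr
          intro n; push_cast; ring
        have := h0.mul_left K
        apply this.congr
        intro n; rw [mul_one_div]
      calc ∑' n : ℕ, ((n : ENNReal) + 1) ^ 2 * μ (S n)
          ≤ ∑' n : ℕ, ENNReal.ofReal (K / ((n:ℝ) + 1) ^ 2) := ENNReal.tsum_le_tsum hbound
        _ = ENNReal.ofReal (∑' n : ℕ, K / ((n:ℝ) + 1) ^ 2) :=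
            (ENNReal.ofReal_tsum_of_nonneg (fun n => by positivity) hsum).symm
        _ < ⊤ := ENNReal.ofReal_lt_top

lemma variance_lower {Ω : Type*} [MeasurableSpace Ω] (μ : Measure Ω) [IsProbabilityMeasure μ]
    (Y : Ω → ℝ) (hYm : Measurable Y) (hmem : MemLp Y 2 μ) (b : ℝ) (hb : 0 < b)
    (p q : ℝ) (hp : p ≤ (μ {ω | Y ω ≤ 0}).toReal) (hq : q ≤ (μ {ω | b ≤ Y ω}).toReal) :
    min p q * (b / 2) ^ 2 ≤ variance Y μ := by
  set m : ℝ := μ[Y] with hm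
  have hvar : variance Y μ = ∫ ω, (Y ω - m) ^ 2 ∂μ := by
    exact variance_eq_integral hYm.aemeasurable
  have hint : Integrable (fun ω => (Y ω - m) ^ 2) μ := by
    have h2 : MemLp (fun ω => Y ω - m) 2 μ := hmem.sub (memLp_const m)
    exact (memLp_two_iff_integrable_sq (h2.aestronglyMeasurable)).1 h2
  -- choose the set
  rcases le_or_gt m (b / 2) with hc | hc
  · -- use {b ≤ Y}
    set A : Set Ω := {ω | b ≤ Y ω} with hA
    have hAmeas : MeasurableSet A := hYm measurableSet_Ici
    have hptws : ∀ ω, A.indicator (fun _ => (b / 2) ^ 2) ω ≤ (Y ω - m) ^ 2 := by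
      intro ω
      rcases Set.indicator_eq_zero_or_self A (fun _ => (b / 2) ^ 2) ω with h0 | h0
      · rw [h0]; positivity
      · rw [h0]
        have hω : b ≤ Y ω := by
          by_contra hcon
          have : ω ∉ A := hcon
          rw [Set.indicator_of_notMem this] at h0
          nlinarith
        nlinarith
    have hind : Integrable (A.indicator (fun _ => (b / 2) ^ 2 : Ω → ℝ)) μ :=
      (integrable_const _).indicator hAmeas
    have h1 : μ[A.indicator (fun _ => (b / 2) ^ 2 : Ω → ℝ)] ≤ variance Y μ := by
      rw [hvar]
      apply integral_mono hind _ hptws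
      · simpa [Pi.pow_apply, Pi.sub_apply] using hint
    have h2 : μ[A.indicator (fun _ => (b / 2) ^ 2 : Ω → ℝ)] = (μ A).toReal * (b / 2) ^ 2 := by
      rw [integral_indicator_const _ hAmeas]; simp [smul_eq_mul, Measure.real]
    have h3 : min p q ≤ (μ A).toReal := le_trans (min_le_right _ _) hq
    nlinarith [sq_nonneg (b / 2)]
  · -- use {Y ≤ 0}
    set A : Set Ω := {ω | Y ω ≤ 0} with hA
    have hAmeas : MeasurableSet A := hYm measurableSet_Iic
    have hptws : ∀ ω, A.indicator (fun _ => (b / 2) ^ 2) ω ≤ (Y ω - m) ^ 2 := by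
      intro ω
      rcases Set.indicator_eq_zero_or_self A (fun _ => (b / 2) ^ 2) ω with h0 | h0
      · rw [h0]; positivity
      · rw [h0]
        have hω : Y ω ≤ 0 := by
          by_contra hcon
          have : ω ∉ A := hcon
          rw [Set.indicator_of_notMem this] at h0
          nlinarith
        nlinarith
    have hind : Integrable (A.indicator (fun _ => (b / 2) ^ 2 : Ω → ℝ)) μ :=
      (integrable_const _).indicator hAmeas
    have h1 : μ[A.indicator (fun _ => (b / 2) ^ 2 : Ω → ℝ)] ≤ variance Y μ := by
      rw [hvar]
      apply integral_mono hind _ hptws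
      · simpa [Pi.pow_apply, Pi.sub_apply] using hint
    have h2 : μ[A.indicator (fun _ => (b / 2) ^ 2 : Ω → ℝ)] = (μ A).toReal * (b / 2) ^ 2 := by
      rw [integral_indicator_const _ hAmeas]; simp [smul_eq_mul, Measure.real]
    have h3 : min p q ≤ (μ A).toReal := le_trans (min_le_left _ _) hp
    nlinarith [sq_nonneg (b / 2)]

end Aux

set_option maxHeartbeats 1000000 in
/-- the naive asymptotic CVaR variance
`σ_c²(β) = β^{−2} Var[(L(X) − v_β)^+]` satisfies `σ_c²(β) ≥ β^{−1+δ}`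
eventually as `β → 0`. -/
theorem stmt8
    {Ω : Type*} [MeasurableSpace Ω] (μ : Measure Ω) [IsProbabilityMeasure μ]
    (Z : Ω → ℝ) (hZ : Measurable Z)
    (hpos : ∀ u : ℝ, 0 < (μ {ω | u < Z ω}).toReal)
    (ρ α Istar : ℝ) (hρ : 0 < ρ) (hα : 0 < α) (hIstar : 0 < Istar)
    (Λ : ℝ → ℝ) (hΛpos : ∀ x : ℝ, 0 < x → 0 < Λ x)
    (hΛmono : ∃ x₀ : ℝ, StrictMonoOn Λ (Set.Ici x₀))
    (hΛtop : Tendsto Λ atTop atTop)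
    (hΛRV : RegVary Λ α)
    (htail : Tendsto (fun u : ℝ => Real.log ((μ {ω | u < Z ω}).toReal) / Λ (u ^ (1 / ρ)))
      atTop (𝓝 (-Istar))) :
    ∀ δ : ℝ, 0 < δ → ∃ β₀ : ℝ, 0 < β₀ ∧ ∀ β : ℝ, 0 < β → β < β₀ →
      β ^ (-(1 : ℝ) + δ) ≤
        β ^ (-(2 : ℝ)) * variance (fun ω => max (Z ω - VaR μ Z β) 0) μ := by
  intro δ hδ
  set G : ℝ → ℝ := fun u => (μ {ω | u < Z ω}).toReal with hG
  have hGanti : Antitone G := by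
    intro u u' huu'
    apply ENNReal.toReal_mono (measure_ne_top μ _)
    apply measure_mono
    intro ω hω
    exact lt_of_le_of_lt huu' hω
  have hgrow : ∀ M : ℝ, 0 < M → ∀ᶠ t in atTop, M * Real.log t ≤ Λ t :=
    fun M hM => rv_log_growth hα hΛpos hΛmono hΛRV M hM
  have hpoly : ∀ᶠ u in atTop, G u ≤ 1 / u ^ 4 :=
    tail_poly hρ hα hIstar hpos hΛpos hgrow htail
  obtain ⟨u₁', hu₁'⟩ := eventually_atTop.1 hpoly
  set u₁ : ℝ := max u₁' 1 with hu₁def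
  have h4 : ∀ u : ℝ, u₁ ≤ u → G u ≤ 1 / u ^ 4 :=
    fun u hu => hu₁' u (le_trans (le_max_left _ _) hu)
  have hmemLp : ∀ v : ℝ, MemLp (fun ω => max (Z ω - v) 0) 2 μ :=
    memLp_of_tail μ Z hZ u₁ (le_max_right _ _) h4
  -- G tends to 0
  have hG0 : Tendsto G atTop (𝓝 0) := by
    apply tendsto_of_tendsto_of_tendsto_of_le_of_le' tendsto_const_nhds
      (a := 0) (hgf := ?_) (hfh := hpoly)
    · exact (tendsto_pow_atTop (by norm_num : (4:ℕ) ≠ 0)).inv_tendsto_atTop.congr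
        (fun u => by rw [Pi.inv_apply, one_div])
    · exact Eventually.of_forall fun u => (hpos u).le
  -- the dilation constant
  set C : ℝ := (1 + δ / 4) ^ (ρ / α) with hC
  have hC1 : 1 < C := by
    rw [hC]
    exact (Real.one_lt_rpow_iff_of_pos (by linarith)).2 (Or.inl ⟨by linarith, by positivity⟩)
  have hCpos : 0 < C := lt_trans one_pos hC1
  have hCval : (C ^ (1 / ρ)) ^ α = 1 + δ / 4 := by
    rw [hC, ← Real.rpow_mul (by positivity), ← Real.rpow_mul (by positivity),
      show ρ / α * (1 / ρ * α) = 1 by field_simp, Real.rpow_one]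
  -- ratio of logs tends to 1 + δ/4
  have hmulC : Tendsto (fun u : ℝ => C * u) atTop atTop :=
    Tendsto.const_mul_atTop hCpos tendsto_id
  have hrpow : Tendsto (fun u : ℝ => u ^ (1 / ρ)) atTop atTop :=
    tendsto_rpow_atTop (by positivity)
  have h_a : Tendsto (fun u : ℝ => Real.log (G (C * u)) / Λ ((C * u) ^ (1 / ρ))) atTop
      (𝓝 (-Istar)) := htail.comp hmulC
  have h_b : Tendsto (fun u : ℝ => Λ ((C * u) ^ (1 / ρ)) / Λ (u ^ (1 / ρ))) atTop
      (𝓝 (1 + δ / 4)) := by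
    have h1 : Tendsto (fun u : ℝ => Λ (u ^ (1 / ρ) * C ^ (1 / ρ)) / Λ (u ^ (1 / ρ))) atTop
        (𝓝 ((C ^ (1 / ρ)) ^ α)) :=
      (hΛRV (C ^ (1 / ρ)) (Real.rpow_pos_of_pos hCpos _)).comp hrpow
    rw [hCval] at h1
    apply h1.congr'
    filter_upwards [eventually_gt_atTop (0:ℝ)] with u hu
    rw [Real.mul_rpow hCpos.le hu.le, mul_comm (C ^ (1/ρ))]
  have h_c : Tendsto (fun u : ℝ => Λ (u ^ (1 / ρ)) / Real.log (G u)) atTop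
      (𝓝 (-Istar)⁻¹) := by
    have := htail.inv₀ (by intro hcon; rw [← hcon] at hIstar; simp at hcon; linarith)
    apply this.congr
    intro u
    rw [inv_div]
  have hlim : Tendsto (fun u : ℝ => Real.log (G (C * u)) / Real.log (G u)) atTop
      (𝓝 (1 + δ / 4)) := by
    have hprod := (h_a.mul h_b).mul h_c
    have hval : -Istar * (1 + δ / 4) * (-Istar)⁻¹ = 1 + δ / 4 := by
      field_simp
    rw [hval] at hprod
    apply hprod.congr'
    filter_upwards [eventually_gt_atTop (0:ℝ)] with u hu
    have h1 : Λ ((C * u) ^ (1 / ρ)) ≠ 0 :=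
      ne_of_gt (hΛpos _ (Real.rpow_pos_of_pos (by positivity) _))
    have h2 : Λ (u ^ (1 / ρ)) ≠ 0 :=
      ne_of_gt (hΛpos _ (Real.rpow_pos_of_pos hu _))
    field_simp
  -- eventual key inequality
  have hlog_neg : ∀ᶠ u : ℝ in atTop, Real.log (G u) < 0 := by
    filter_upwards [hpoly, eventually_gt_atTop (1:ℝ)] with u hu h1
    apply Real.log_neg (hpos u)
    have h2 : 1 < u ^ 4 := one_lt_pow₀ h1 (by norm_num)
    have : 1 / u ^ 4 < 1 := by
      rw [div_lt_one (by positivity)]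
      exact h2
    linarith
  have hratio : ∀ᶠ u : ℝ in atTop, Real.log (G (C * u)) / Real.log (G u) ≤ 1 + δ / 2 :=
    hlim.eventually (eventually_le_nhds (by linarith))
  have hkey : ∀ᶠ u : ℝ in atTop, (1 + δ / 2) * Real.log (G u) ≤ Real.log (G (C * u)) := by
    filter_upwards [hratio, hlog_neg] with u h1 h2
    exact (div_le_iff_of_neg h2).1 h1
  obtain ⟨U₂', hU₂'⟩ := eventually_atTop.1 (hkey.and hlog_neg)
  -- thresholds
  set U : ℝ := max U₂' (3 / (C - 1) + 1) with hU
  set β₀ : ℝ := min (G (U + 1)) (1 / 2) with hβ₀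
  refine ⟨β₀, lt_min (hpos _) (by norm_num), ?_⟩
  intro β hβ hββ₀
  have hβhalf : β < 1 / 2 := lt_of_lt_of_le hββ₀ (min_le_right _ _)
  have hβ1 : β < 1 := by linarith
  have hβGU : β < G (U + 1) := lt_of_lt_of_le hββ₀ (min_le_left _ _)
  -- the VaR
  set F : ℝ → ℝ := fun u => (μ {ω | Z ω ≤ u}).toReal with hF
  have hFG : ∀ u : ℝ, F u = 1 - G u := by
    intro u
    have hc : {ω | Z ω ≤ u}ᶜ = {ω | u < Z ω} := by
      ext ω; simp [not_le]
    have hms : MeasurableSet {ω | Z ω ≤ u} := hZ measurableSet_Iic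
    have := prob_compl_eq_one_sub (μ := μ) hms
    rw [hc] at this
    rw [hF, hG]
    simp only
    rw [this, ENNReal.toReal_sub_of_le prob_le_one ENNReal.one_ne_top]
    simp
  set v : ℝ := VaR μ Z β with hv
  set S : Set ℝ := {u : ℝ | 1 - β ≤ (μ {ω | Z ω ≤ u}).toReal} with hSdef
  have hvS : v = sInf S := rfl
  have hmemS : ∀ u : ℝ, u ∈ S ↔ G u ≤ β := by
    intro u
    constructor
    · intro h
      have : 1 - β ≤ F u := h
      rw [hFG] at this; linarith
    · intro h
      show 1 - β ≤ F u
      rw [hFG]; linarith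
  have hne : S.Nonempty := by
    obtain ⟨u, hu⟩ := (hG0.eventually_lt_const hβ).exists
    exact ⟨u, (hmemS u).2 hu.le⟩
  have hlb : ∀ u : ℝ, β < G u → u ≤ v := by
    intro u hu
    rw [hvS]
    apply le_csInf hne
    intro s hs
    by_contra hcon
    push_neg at hcon
    have := hGanti hcon.le
    have hsb := (hmemS s).1 hs
    linarith
  have hbdd : BddBelow S := by
    refine ⟨U + 1, fun s hs => ?_⟩
    by_contra hcon
    push_neg at hcon
    have := hGanti hcon.le
    have hsb := (hmemS s).1 hs
    linarith
  have hvge : U + 1 ≤ v := hlb (U + 1) hβGU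
  set us : ℝ := v - 1 with hus
  have husU : U ≤ us := by rw [hus]; linarith
  have husU₂ : U₂' ≤ us := le_trans (le_max_left _ _) husU
  have husC : 3 / (C - 1) + 1 ≤ us := le_trans (le_max_right _ _) husU
  obtain ⟨hkey_us, hlogneg_us⟩ := hU₂' us husU₂
  have hGus : β < G us := by
    by_contra hcon
    push_neg at hcon
    have hmem : us ∈ S := (hmemS us).2 hcon
    have : v ≤ us := by rw [hvS]; exact csInf_le hbdd hmem
    rw [hus] at this; linarith
  -- lower bound on G (C * us)
  have hlogβ : Real.log β < Real.log (G us) := Real.log_lt_log hβ hGus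
  have hstep : (1 + δ / 2) * Real.log β ≤ Real.log (G (C * us)) := by
    have h1 : (1 + δ / 2) * Real.log β ≤ (1 + δ / 2) * Real.log (G us) :=
      mul_le_mul_of_nonneg_left hlogβ.le (by linarith)
    linarith
  have hGCus : β ^ (1 + δ / 2) ≤ G (C * us) := by
    rw [Real.rpow_def_of_pos hβ]
    calc Real.exp (Real.log β * (1 + δ / 2)) = Real.exp ((1 + δ / 2) * Real.log β) := by
          ring_nf
      _ ≤ Real.exp (Real.log (G (C * us))) := Real.exp_le_exp.2 hstep
      _ = G (C * us) := Real.exp_log (hpos _)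
  -- the gap b
  set b : ℝ := C * us - v with hb
  have hb2 : 2 ≤ b := by
    have hC1' : 0 < C - 1 := by linarith
    have h1 : 3 ≤ (C - 1) * us := by
      have h2 : (3 / (C - 1) + 1) * (C - 1) ≤ us * (C - 1) :=
        mul_le_mul_of_nonneg_right husC hC1'.le
      calc (3:ℝ) ≤ (3 / (C - 1) + 1) * (C - 1) := by field_simp; nlinarith
        _ ≤ us * (C - 1) := h2
        _ = (C - 1) * us := by ring
    have : b = (C - 1) * us - 1 := by rw [hb, hus]; ring
    linarith
  have hbpos : 0 < b := by linarith
  -- measure bounds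
  set Y : Ω → ℝ := fun ω => max (Z ω - v) 0 with hYdef
  have hYm : Measurable Y := (hZ.sub_const v).max measurable_const
  have hGv : G v ≤ β := by
    have hub : ∀ u : ℝ, v < u → G u ≤ β := by
      intro u hu
      rw [hvS] at hu
      obtain ⟨s, hsS, hsu⟩ := exists_lt_of_csInf_lt hne hu
      exact le_trans (hGanti hsu.le) ((hmemS s).1 hsS)
    have hset : {ω | v < Z ω} = ⋃ n : ℕ, {ω | v + 1 / ((n:ℝ) + 1) < Z ω} := by
      ext ω
      simp only [Set.mem_setOf_eq, Set.mem_iUnion]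
      constructor
      · intro hω
        obtain ⟨n, hn⟩ := exists_nat_one_div_lt (sub_pos.2 hω)
        exact ⟨n, by linarith⟩
      · rintro ⟨n, hn⟩
        have : 0 < 1 / ((n:ℝ) + 1) := by positivity
        linarith
    have hmono : Monotone (fun n : ℕ => {ω | v + 1 / ((n:ℝ) + 1) < Z ω}) := by
      intro m n hmn ω hω
      simp only [Set.mem_setOf_eq] at *
      have h1 : 1 / ((n:ℝ) + 1) ≤ 1 / ((m:ℝ) + 1) := by
        apply one_div_le_one_div_of_le (by positivity)
        have : (m:ℝ) ≤ (n:ℝ) := by exact_mod_cast hmn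
        linarith
      linarith
    have hμ : μ {ω | v < Z ω} ≤ ENNReal.ofReal β := by
      rw [hset, Directed.measure_iUnion hmono.directed_le]
      apply iSup_le
      intro n
      have h1 : G (v + 1 / ((n:ℝ) + 1)) ≤ β := hub _ (by
        have : 0 < 1 / ((n:ℝ) + 1) := by positivity
        linarith)
      calc μ {ω | v + 1 / ((n:ℝ) + 1) < Z ω}
          = ENNReal.ofReal (G (v + 1 / ((n:ℝ) + 1))) :=
            (ENNReal.ofReal_toReal (measure_ne_top μ _)).symm
        _ ≤ ENNReal.ofReal β := ENNReal.ofReal_le_ofReal h1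
    exact ENNReal.toReal_le_of_le_ofReal hβ.le hμ
  have hp : 1 - β ≤ (μ {ω | Y ω ≤ 0}).toReal := by
    have hset : {ω | Y ω ≤ 0} = {ω | Z ω ≤ v} := by
      ext ω
      simp only [hYdef, Set.mem_setOf_eq, max_le_iff, le_refl, and_true]
      constructor <;> intro h <;> linarith [h]
    rw [hset]
    have h2 : (μ {ω | Z ω ≤ v}).toReal = 1 - G v := hFG v
    rw [h2]
    linarith
  have hq : β ^ (1 + δ / 2) ≤ (μ {ω | b ≤ Y ω}).toReal := by
    have hsub : {ω | C * us < Z ω} ⊆ {ω | b ≤ Y ω} := by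
      intro ω hω
      simp only [Set.mem_setOf_eq] at hω ⊢
      have h1 : b ≤ Z ω - v := by rw [hb]; linarith
      exact le_trans h1 (le_max_left _ _)
    calc β ^ (1 + δ / 2) ≤ G (C * us) := hGCus
      _ ≤ (μ {ω | b ≤ Y ω}).toReal :=
          ENNReal.toReal_mono (measure_ne_top μ _) (measure_mono hsub)
  -- apply variance bound
  have hrpow_le : β ^ (1 + δ / 2) ≤ β := by
    calc β ^ (1 + δ / 2) ≤ β ^ (1:ℝ) :=
          Real.rpow_le_rpow_of_exponent_ge hβ hβ1.le (by linarith)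
      _ = β := Real.rpow_one β
  have hmin : min (1 - β) (β ^ (1 + δ / 2)) = β ^ (1 + δ / 2) :=
    min_eq_right (by linarith)
  have hvar := variance_lower μ Y hYm (hmemLp v) b hbpos (1 - β) (β ^ (1 + δ / 2)) hp hq
  rw [hmin] at hvar
  have hbsq : 1 ≤ (b / 2) ^ 2 := by nlinarith
  have hrpos : 0 < β ^ (1 + δ / 2) := Real.rpow_pos_of_pos hβ _
  have hvar2 : β ^ (1 + δ / 2) ≤ variance Y μ := by nlinarith
  -- final computation
  have hβm2 : (0:ℝ) < β ^ (-(2:ℝ)) := Real.rpow_pos_of_pos hβ _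
  calc β ^ (-(1:ℝ) + δ) ≤ β ^ (-(1:ℝ) + δ / 2) := by
        apply Real.rpow_le_rpow_of_exponent_ge hβ hβ1.le
        linarith
    _ = β ^ (-(2:ℝ)) * β ^ (1 + δ / 2) := by
        rw [← Real.rpow_add hβ]
        ring_nf
    _ ≤ β ^ (-(2:ℝ)) * variance Y μ := by nlinarith
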